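/- Let 𝔖 be an almost-arithmetic cofinite G-semimatroid and X∈𝒞 (so stab(X), the setwise stabilizer of X, equals ∩_{x∈X}stab(x)). Then: (a) for every X'∈𝒞 with X'̲=X̲ one has stab(X)=stab(X'); (b) if x₀∈X and rk(X∖{x₀})=rk(X), then stab(X)=stab(X∖{x₀}). -/
import Mathlib


open scoped Classical Pointwise


/-- A finitary semimatroid on the ground set `S`: a nonempty, finite-dimensional
simplicial complex `C` of finite subsets of `S` (containing all singletons), together
with a rank function satisfying (R1)-(R3), (CR1), (CR2). -/
structure FinSemimatroid (S : Type*) [DecidableEq S] where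
  C : Set (Finset S)
  rk : Finset S → ℕ
  nonempty : C.Nonempty
  downClosed : ∀ ⦃X Y : Finset S⦄, X ∈ C → Y ⊆ X → Y ∈ C
  singleton_mem : ∀ x : S, ({x} : Finset S) ∈ C
  finDim : ∃ d : ℕ, ∀ X ∈ C, X.card ≤ d
  r1 : ∀ X ∈ C, rk X ≤ X.card
  r2 : ∀ ⦃X Y : Finset S⦄, X ∈ C → Y ∈ C → X ⊆ Y → rk X ≤ rk Y
  r3 : ∀ ⦃X Y : Finset S⦄, X ∈ C → Y ∈ C → X ∪ Y ∈ C →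
    rk (X ∪ Y) + rk (X ∩ Y) ≤ rk X + rk Y
  cr1 : ∀ ⦃X Y : Finset S⦄, X ∈ C → Y ∈ C → rk X = rk (X ∩ Y) → X ∪ Y ∈ C
  cr2 : ∀ ⦃X Y : Finset S⦄, X ∈ C → Y ∈ C → rk X < rk Y →
    ∃ y ∈ Y, y ∉ X ∧ insert y X ∈ C

namespace FinSemimatroid

variable {S : Type*} [DecidableEq S]

/-- The closure of a central set. -/
def cl (M : FinSemimatroid S) (X : Finset S) : Set S :=
  {y : S | insert y X ∈ M.C ∧ M.rk (insert y X) = M.rk X}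

/-- A flat is a closed central set. -/
def IsFlat (M : FinSemimatroid S) (X : Finset S) : Prop :=
  X ∈ M.C ∧ M.cl X = (X : Set S)

/-- The poset of flats, ordered by inclusion. -/
abbrev Flats (M : FinSemimatroid S) : Type _ := {X : Finset S // M.IsFlat X}

/-- A simple finitary semimatroid. -/
def Simple (M : FinSemimatroid S) : Prop :=
  (∀ x : S, M.rk {x} = 1) ∧
    ∀ x y : S, x ≠ y → ({x, y} : Finset S) ∈ M.C → M.rk {x, y} = 2

end FinSemimatroid

/-- A poset is chain-finite if all its chains are finite. -/
def ChainFinite (L : Type*) [PartialOrder L] : Prop :=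
  ∀ c : Set L, IsChain (· ≤ ·) c → c.Finite

/-- An atom of a bounded-below poset: an element covering the minimum. -/
def PosetAtom {L : Type*} [PartialOrder L] (a : L) : Prop :=
  ∃ bot : L, IsBot bot ∧ bot ⋖ a

/-- `L` (with rank function `rk`) is a finite geometric lattice (finite, bounded below,
a lattice, ranked by `rk`, atomic and semimodular) with at most `N` atoms. -/
def IsFinGeomLatticeAtMost (L : Type*) [PartialOrder L] (rk : L → ℕ) (N : ℕ) : Prop :=
  Finite L ∧
    ∃ bot : L, IsBot bot ∧
      (∀ x y : L, ∃ m : L, IsGLB {x, y} m) ∧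
      (∀ x y : L, ∃ j : L, IsLUB {x, y} j) ∧
      (∀ x y : L, x ⋖ y → rk y = rk x + 1) ∧
      (∀ x : L, ∃ A : Set L, (∀ a ∈ A, bot ⋖ a) ∧ IsLUB A x) ∧
      (∀ x y m j : L, IsGLB {x, y} m → IsLUB {x, y} j → rk j + rk m ≤ rk x + rk y) ∧
      Nat.card {a : L | bot ⋖ a} ≤ N
/-- A `G`-semimatroid: an action of `G` on a finitary semimatroid, preserving
centrality and rank. -/
structure GSemimatroid (G S : Type*) [Group G] [MulAction G S] [DecidableEq S]
    extends FinSemimatroid S where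
  smul_mem : ∀ (g : G) ⦃X : Finset S⦄, X ∈ C → X.image (g • ·) ∈ C
  rk_smul : ∀ (g : G) ⦃X : Finset S⦄, X ∈ C → rk (X.image (g • ·)) = rk X

namespace GSemimatroid

variable {G S : Type*} [Group G] [MulAction G S] [DecidableEq S]

/-- The set of orbits `E_𝔖 = S/G`. -/
abbrev E (G S : Type*) [Group G] [MulAction G S] : Type _ :=
  Quotient (MulAction.orbitRel G S)

/-- The orbit of a point. -/
def orbOf (G : Type*) {S : Type*} [Group G] [MulAction G S] (x : S) : E G S :=
  Quotient.mk (MulAction.orbitRel G S) x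

/-- `X̲`: the set of orbits met by `X`. -/
def under (G : Type*) {S : Type*} [Group G] [MulAction G S] (X : Finset S) :
    Set (E G S) :=
  orbOf G '' (X : Set S)

variable (M : GSemimatroid G S)

/-- `𝒞̲ = {X̲ : X ∈ 𝒞}`. -/
def CQ : Set (Set (E G S)) := {A | ∃ X ∈ M.C, under G X = A}

/-- `rk̲ A = max { rk X : X ∈ 𝒞, X̲ ⊆ A }`. -/
noncomputable def rkQ (A : Set (E G S)) : ℕ :=
  sSup {n : ℕ | ∃ X ∈ M.C, under G X ⊆ A ∧ M.rk X = n}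

/-- `𝒞_A`: the central sets lying over `A`. -/
def CA (A : Set (E G S)) : Set (Finset S) := {X | X ∈ M.C ∧ under G X = A}

/-- The type of central sets. -/
abbrev Cen : Type _ := {X : Finset S // X ∈ M.C}

/-- The `G`-orbit relation on central sets. -/
def cenRel (X Y : M.Cen) : Prop := ∃ g : G, X.1.image (g • ·) = Y.1

/-- The set `𝒞/G` of orbits of central sets. -/
def COrb : Type _ := Quot M.cenRel

/-- The action is cofinite if `𝒞/G` is finite. -/
def Cofinite : Prop := Finite M.COrb

/-- `m_𝔖(A) = |𝒞_A / G|`. -/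
noncomputable def m (A : Set (E G S)) : ℕ :=
  Nat.card {O : M.COrb // ∃ X : M.Cen, under G X.1 = A ∧ Quot.mk M.cenRel X = O}

def WeaklyTranslative : Prop :=
  ∀ (g : G) (x : S), ({x, g • x} : Finset S) ∈ M.C →
    M.rk {x, g • x} = M.rk ({x} : Finset S)

def Translative : Prop :=
  ∀ (g : G) (x : S), ({x, g • x} : Finset S) ∈ M.C → g • x = x

def Centered : Prop := ∃ X ∈ M.C, under G X = (Set.univ : Set (E G S))

def Normal (_M : GSemimatroid G S) : Prop :=
  ∀ x : S, Subgroup.Normal (MulAction.stabilizer G x)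

def AlmostArithmetic : Prop := M.Translative ∧ M.Normal

/-- The action is arithmetic: almost-arithmetic, and for every central `X` the set
`W(X) ⊆ Γ^X` is a subgroup (expressed via representative families of group elements). -/
def Arithmetic : Prop :=
  M.AlmostArithmetic ∧
    ∀ ⦃X : Finset S⦄, X ∈ M.C → ∀ γ δ : S → G,
      X.image (fun x => γ x • x) ∈ M.C → X.image (fun x => δ x • x) ∈ M.C →
        X.image (fun x => (γ x * δ x) • x) ∈ M.C ∧
          X.image (fun x => (γ x)⁻¹ • x) ∈ M.C

/-- Remove from `X` all elements of the orbit `a₀`. -/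
noncomputable def strip (a₀ : E G S) (X : Finset S) : Finset S :=
  X.filter (fun x => orbOf G x ≠ a₀)

/-- The Tutte polynomial of a `G`-semimatroid, as a function `ℤ × ℤ → ℤ`. -/
noncomputable def Tutte (x y : ℤ) : ℤ :=
  ∑ᶠ A ∈ M.CQ, (M.m A : ℤ) * (x - 1) ^ (M.rkQ Set.univ - M.rkQ A) *
    (y - 1) ^ (Nat.card A - M.rkQ A)

end GSemimatroid

open GSemimatroid

section Aux

variable {G S : Type*} [Group G] [MulAction G S] [DecidableEq S]

/-- For a translative action, the setwise stabilizer of a central set equals the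
intersection of the pointwise stabilizers. -/
lemma stab_eq_iInf_aux (M : GSemimatroid G S) (htr : M.Translative)
    {X : Finset S} (hX : X ∈ M.C) :
    MulAction.stabilizer G X = ⨅ x ∈ X, MulAction.stabilizer G x := by
  apply le_antisymm
  · intro g hg
    simp only [Subgroup.mem_iInf]
    intro x hx
    have hgX : g • X = X := hg
    have hmem : g • x ∈ X := by
      rw [← hgX]; exact Finset.smul_mem_smul_finset hx
    have hpair : ({x, g • x} : Finset S) ∈ M.C := by
      apply M.downClosed hX
      intro y hy
      rcases Finset.mem_insert.1 hy with h | h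
      · exact h ▸ hx
      · exact (Finset.mem_singleton.1 h) ▸ hmem
    exact htr g x hpair
  · intro g hg
    simp only [Subgroup.mem_iInf] at hg
    have : g • X = X := by
      rw [Finset.smul_finset_def]
      rw [Finset.image_congr (fun x hx => hg x hx)]
      exact Finset.image_id
    exact this

/-- In a normal translative action, if `g` fixes pointwise a set whose orbit set
contains that of `X'`, then `g` fixes `X'` pointwise. -/
lemma fixes_of_under_subset (hnorm : ∀ x : S, Subgroup.Normal (MulAction.stabilizer G x))
    {X X' : Finset S} (hsub : under G X' ⊆ under G X)
    {g : G} (hg : ∀ x ∈ X, g • x = x) : ∀ x' ∈ X', g • x' = x' := by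
  intro x' hx'
  have : orbOf G x' ∈ under G X := hsub ⟨x', hx', rfl⟩
  rcases this with ⟨x, hxX, horb⟩
  have hrel : x ∈ MulAction.orbit G x' := by
    have := Quotient.exact horb
    exact this
  rcases hrel with ⟨h, hh⟩
  have hh' : (h : G) • x' = x := hh
  have hgx : g • ((h : G) • x') = (h : G) • x' := by rw [hh']; exact hg x hxX
  have hconj : ((h : G)⁻¹ * g * h) ∈ MulAction.stabilizer G x' := by
    rw [MulAction.mem_stabilizer_iff]
    rw [mul_smul, mul_smul, hgx, inv_smul_smul]
  have := (hnorm x').conj_mem _ hconj (h : G)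
  have hgmem : g ∈ MulAction.stabilizer G x' := by
    have heq : (h : G) * ((h : G)⁻¹ * g * h) * (h : G)⁻¹ = g := by group
    rwa [heq] at this
  exact hgmem

end Aux

/-- For an almost-arithmetic cofinite `G`-semimatroid and `X ∈ 𝒞`:
the setwise stabilizer of `X` equals `⋂_{x ∈ X} stab(x)`; (a) it only depends on `X̲`;
(b) it is unchanged upon removing an element that does not lower the rank. -/
theorem almostArithmetic_stabilizers
    {G S : Type*} [Group G] [MulAction G S] [DecidableEq S]
    (M : GSemimatroid G S) (hcof : M.Cofinite) (haa : M.AlmostArithmetic)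
    (X : Finset S) (hX : X ∈ M.C) :
    MulAction.stabilizer G X = (⨅ x ∈ X, MulAction.stabilizer G x) ∧
    (∀ X' ∈ M.C, under G X' = under G X →
      MulAction.stabilizer G X = MulAction.stabilizer G X') ∧
    (∀ x₀ ∈ X, M.rk (X.erase x₀) = M.rk X →
      MulAction.stabilizer G X = MulAction.stabilizer G (X.erase x₀)) := by
  obtain ⟨htr, hnorm⟩ := haa
  refine ⟨stab_eq_iInf_aux M htr hX, ?_, ?_⟩
  · intro X' hX' hunder
    rw [stab_eq_iInf_aux M htr hX, stab_eq_iInf_aux M htr hX']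
    apply le_antisymm
    · intro g hg
      simp only [Subgroup.mem_iInf] at hg ⊢
      exact fun x' hx' =>
        fixes_of_under_subset hnorm hunder.le (fun x hx => hg x hx) x' hx'
    · intro g hg
      simp only [Subgroup.mem_iInf] at hg ⊢
      exact fun x hx =>
        fixes_of_under_subset hnorm hunder.ge (fun x' hx' => hg x' hx') x hx
  · intro x₀ hx₀ hrk
    have hY : X.erase x₀ ∈ M.C := M.downClosed hX (Finset.erase_subset _ _)
    rw [stab_eq_iInf_aux M htr hX, stab_eq_iInf_aux M htr hY]
    apply le_antisymm
    · intro g hg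
      simp only [Subgroup.mem_iInf] at hg ⊢
      exact fun y hy => hg y (Finset.mem_of_mem_erase hy)
    · intro g hg
      simp only [Subgroup.mem_iInf] at hg ⊢
      -- g fixes X.erase x₀ pointwise; show it fixes x₀ too
      have hfix : ∀ y ∈ X.erase x₀, g • y = y := fun y hy => hg y hy
      have hgX : X.image (g • ·) ∈ M.C := M.smul_mem g hX
      have hinter : X ∩ X.image (g • ·) ∈ M.C :=
        M.downClosed hX Finset.inter_subset_left
      have hYsub : X.erase x₀ ⊆ X ∩ X.image (g • ·) := by
        intro y hy
        refine Finset.mem_inter.2 ⟨Finset.mem_of_mem_erase hy, ?_⟩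
        exact Finset.mem_image.2 ⟨y, Finset.mem_of_mem_erase hy, hfix y hy⟩
      have hrkeq : M.rk X = M.rk (X ∩ X.image (g • ·)) := by
        apply le_antisymm
        · rw [← hrk]; exact M.r2 hY hinter hYsub
        · exact M.r2 hinter hX Finset.inter_subset_left
      have hunion : X ∪ X.image (g • ·) ∈ M.C := M.cr1 hX hgX hrkeq
      have hpair : ({x₀, g • x₀} : Finset S) ∈ M.C := by
        apply M.downClosed hunion
        intro y hy
        rcases Finset.mem_insert.1 hy with h | h
        · exact Finset.mem_union_left _ (h ▸ hx₀)
        · exact Finset.mem_union_right _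
            (Finset.mem_image.2 ⟨x₀, hx₀, ((Finset.mem_singleton.1 h) ▸ rfl)⟩)
      intro x hx
      by_cases hxx : x = x₀
      · subst hxx; exact htr g x hpair
      · exact hg x (Finset.mem_erase.2 ⟨hxx, hx⟩)
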